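/- arXiv:1808.02615 — 4 statements merged into one kernel-verified Lean document; each statement's English description precedes it below -/
import Mathlib

section
/- Let w, f : [a,b] → ℝ with w integrable and f twice continuously differentiable. Then ∫_a^b (2f(x) - f(a) - f(b)) w(x) dx = ∫_a^b Θ^{(1)}(x) f''(x) dx - (Θ^{(1)}(b) f'(b) - Θ^{(1)}(a) f'(a)), where Θ^{(1)}(x) = ∫_a^x w(ξ)(x-ξ) dξ + ∫_b^x w(ξ)(x-ξ) dξ. -/
open MeasureTheory intervalIntegral Topology

open Set Filter Asymptotics in
/-- Pointwise integration-by-parts derivative for a primitive of a merely integrable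
function against a `C¹` function. -/
lemma prim_parts_aux {g F F' : ℝ → ℝ} (hg : Integrable g (volume : Measure ℝ))
    (hF : ∀ x, HasDerivAt F (F' x) x) (hF'c : Continuous F') (c y : ℝ) :
    HasDerivAt (fun z => (∫ x in c..z, g x) * F z - ∫ x in c..z, g x * F x)
      (F' y * ∫ x in c..y, g x) y := by
  have hFc : Continuous F :=
    continuous_iff_continuousAt.2 fun x => (hF x).continuousAt
  have hgi : ∀ u v : ℝ, IntervalIntegrable g volume u v := fun u v => hg.intervalIntegrable
  have hgFi : ∀ u v : ℝ, IntervalIntegrable (fun t => g t * F t) volume u v := fun u v =>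
    (hgi u v).mul_continuousOn hFc.continuousOn
  have key : ∀ z : ℝ,
      ((∫ x in c..z, g x) * F z - ∫ x in c..z, g x * F x) -
        ((∫ x in c..y, g x) * F y - ∫ x in c..y, g x * F x) -
          (z - y) * (F' y * ∫ x in c..y, g x)
      = (∫ x in c..y, g x) * (F z - F y - (z - y) * F' y)
          + ∫ t in y..z, g t * (F z - F t) := by
    intro z
    have h1 : (∫ x in c..y, g x) + ∫ x in y..z, g x = ∫ x in c..z, g x :=
      integral_add_adjacent_intervals (hgi c y) (hgi y z)
    have h2 : (∫ x in c..y, g x * F x) + ∫ x in y..z, g x * F x = ∫ x in c..z, g x * F x :=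
      integral_add_adjacent_intervals (hgFi c y) (hgFi y z)
    have h3 : ∫ t in y..z, g t * (F z - F t)
        = (∫ t in y..z, g t) * F z - ∫ t in y..z, g t * F t := by
      have e : ∀ t, g t * (F z - F t) = g t * F z - g t * F t := fun t => by ring
      simp_rw [e]
      rw [integral_sub ((hgi y z).mul_const (F z)) (hgFi y z), intervalIntegral.integral_mul_const]
    rw [← h1, ← h2, h3]; ring
  have term1 : (fun z => (∫ x in c..y, g x) * (F z - F y - (z - y) * F' y))
      =o[𝓝 y] fun z => z - y := by
    have h := (hasDerivAt_iff_isLittleO.mp (hF y)).const_mul_left (∫ x in c..y, g x)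
    simpa [smul_eq_mul] using h
  have term2 : (fun z => ∫ t in y..z, g t * (F z - F t)) =o[𝓝 y] fun z => z - y := by
    rw [isLittleO_iff]
    intro ε hε
    obtain ⟨C, hC⟩ : ∃ C, ∀ x ∈ Icc (y - 1) (y + 1), ‖F' x‖ ≤ C :=
      isCompact_Icc.exists_bound_of_continuousOn hF'c.continuousOn
    have hC0 : 0 ≤ C := le_trans (norm_nonneg _) (hC y ⟨by linarith, by linarith⟩)
    have hlip : ∀ u ∈ Icc (y - 1) (y + 1), ∀ v ∈ Icc (y - 1) (y + 1),
        ‖F v - F u‖ ≤ C * ‖v - u‖ := fun u hu v hv =>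
      Convex.norm_image_sub_le_of_norm_hasDerivWithin_le
        (fun x _ => (hF x).hasDerivWithinAt) (fun x hx => hC x hx) (convex_Icc _ _) hu hv
    have hA : Continuous fun z => ∫ t in y..z, ‖g t‖ := hg.norm.continuous_primitive y
    have h0 : Tendsto (fun z => ∫ t in y..z, ‖g t‖) (𝓝 y) (𝓝 0) := by
      have h := hA.continuousAt (x := y)
      rwa [ContinuousAt, intervalIntegral.integral_same] at h
    have hδpos : (0 : ℝ) < ε / (C + 1) := by positivity
    have hev1 : ∀ᶠ z in 𝓝 y, |∫ t in y..z, ‖g t‖| < ε / (C + 1) := by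
      have := h0.eventually (eventually_abs_sub_lt 0 hδpos)
      simpa using this
    have hev2 : ∀ᶠ z in 𝓝 y, |z - y| < 1 := eventually_abs_sub_lt y one_pos
    filter_upwards [hev1, hev2] with z h1 h2
    have hzmem : z ∈ Icc (y - 1) (y + 1) := by
      rw [abs_lt] at h2; exact ⟨by linarith [h2.1], by linarith [h2.2]⟩
    have hbound : ∀ t ∈ Set.uIoc y z, ‖g t * (F z - F t)‖ ≤ ‖g t‖ * (C * |z - y|) := by
      intro t ht
      have hmm : min y z < t ∧ t ≤ max y z := by
        rcases ht with ⟨h, h'⟩; exact ⟨h, h'⟩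
      have hty : |t - y| ≤ |z - y| := by
        rcases le_total y z with hyz | hyz
        · rw [min_eq_left hyz] at hmm; rw [max_eq_right hyz] at hmm
          rw [abs_of_nonneg (by linarith [hmm.1] : (0:ℝ) ≤ t - y),
            abs_of_nonneg (by linarith : (0:ℝ) ≤ z - y)]
          linarith [hmm.2]
        · rw [min_eq_right hyz] at hmm; rw [max_eq_left hyz] at hmm
          rw [abs_of_nonpos (by linarith [hmm.2] : t - y ≤ 0),
            abs_of_nonpos (by linarith : z - y ≤ 0)]
          linarith [hmm.1]
      have hzt : |z - t| ≤ |z - y| := by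
        rcases le_total y z with hyz | hyz
        · rw [min_eq_left hyz] at hmm; rw [max_eq_right hyz] at hmm
          rw [abs_of_nonneg (by linarith [hmm.2] : (0:ℝ) ≤ z - t),
            abs_of_nonneg (by linarith : (0:ℝ) ≤ z - y)]
          linarith [hmm.1]
        · rw [min_eq_right hyz] at hmm; rw [max_eq_left hyz] at hmm
          rw [abs_of_nonpos (by linarith [hmm.1] : z - t ≤ 0),
            abs_of_nonpos (by linarith : z - y ≤ 0)]
          linarith [hmm.2]
      have htmem : t ∈ Icc (y - 1) (y + 1) := by
        have := le_trans hty (le_of_lt h2)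
        rw [abs_le] at this
        exact ⟨by linarith [this.1], by linarith [this.2]⟩
      rw [norm_mul]
      refine mul_le_mul_of_nonneg_left ?_ (norm_nonneg _)
      calc ‖F z - F t‖ ≤ C * ‖z - t‖ := hlip t htmem z hzmem
        _ ≤ C * |z - y| := by
            rw [Real.norm_eq_abs]
            exact mul_le_mul_of_nonneg_left hzt hC0
    have hmain : ‖∫ t in y..z, g t * (F z - F t)‖
        ≤ |∫ t in y..z, ‖g t‖ * (C * |z - y|)| := by
      refine intervalIntegral.norm_integral_le_abs_of_norm_le ?_
        ((hg.norm.intervalIntegrable).mul_const _)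
      filter_upwards [ae_restrict_mem measurableSet_uIoc] with t ht
      exact hbound t ht
    refine le_trans hmain ?_
    rw [intervalIntegral.integral_mul_const, abs_mul, abs_of_nonneg (by positivity : (0:ℝ) ≤ C * |z - y|)]
    have hd : |∫ t in y..z, ‖g t‖| ≤ ε / (C + 1) := h1.le
    have hC1 : (ε / (C + 1)) * (C + 1) = ε := div_mul_cancel₀ ε (by linarith)
    have habs : (0:ℝ) ≤ |z - y| := abs_nonneg _
    calc |∫ t in y..z, ‖g t‖| * (C * |z - y|)
        ≤ (ε / (C + 1)) * (C * |z - y|) := by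
          exact mul_le_mul_of_nonneg_right hd (by positivity)
      _ ≤ ε * ‖z - y‖ := by
          rw [Real.norm_eq_abs]
          nlinarith [hδpos.le]
  rw [hasDerivAt_iff_isLittleO]
  have := term1.add term2
  refine this.congr' (EventuallyEq.of_eq (funext fun z => ?_)) (by rfl)
  rw [← key z]
  simp [smul_eq_mul]

open Set Filter Asymptotics in
/-- The derivative of `x ↦ ∫ ξ in c..x, g ξ * (x - ξ)` is `∫ ξ in c..x, g ξ`. -/
lemma prim_deriv_aux {g : ℝ → ℝ} (hg : Integrable g (volume : Measure ℝ)) (c y : ℝ) :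
    HasDerivAt (fun z => ∫ ξ in c..z, g ξ * (z - ξ)) (∫ ξ in c..y, g ξ) y := by
  have h := prim_parts_aux (F := id) (F' := fun _ => (1:ℝ)) hg
    (fun x => hasDerivAt_id x) continuous_const c y
  have heq : ∀ z : ℝ, (∫ ξ in c..z, g ξ * (z - ξ))
      = (∫ x in c..z, g x) * id z - ∫ x in c..z, g x * id x := by
    intro z
    have e : ∀ ξ, g ξ * (z - ξ) = g ξ * z - g ξ * ξ := fun ξ => by ring
    simp_rw [e]
    simp only [id_eq]
    have i1 : IntervalIntegrable (fun ξ => g ξ * z) volume c z :=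
      hg.intervalIntegrable.mul_const z
    have i2 : IntervalIntegrable (fun ξ => g ξ * ξ) volume c z :=
      hg.intervalIntegrable.mul_continuousOn continuous_id.continuousOn
    rw [integral_sub i1 i2, intervalIntegral.integral_mul_const]
  have hfun : (fun z => ∫ ξ in c..z, g ξ * (z - ξ))
      = fun z => (∫ x in c..z, g x) * id z - ∫ x in c..z, g x * id x := funext heq
  rw [hfun]
  simpa using h

theorem stmt_2 (a b : ℝ) (hab : a < b) (w f f' f'' : ℝ → ℝ)
    (hw : IntervalIntegrable w volume a b)
    (hf : ∀ x, HasDerivAt f (f' x) x)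
    (hf' : ∀ x, HasDerivAt f' (f'' x) x)
    (hf'' : IntervalIntegrable f'' volume a b) :
    (∫ x in a..b, (2 * f x - f a - f b) * w x) =
      (∫ x in a..b, ((∫ ξ in a..x, w ξ * (x - ξ)) + (∫ ξ in b..x, w ξ * (x - ξ))) * f'' x)
        - (((∫ ξ in a..b, w ξ * (b - ξ)) + (∫ ξ in b..b, w ξ * (b - ξ))) * f' b
           - ((∫ ξ in a..a, w ξ * (a - ξ)) + (∫ ξ in b..a, w ξ * (a - ξ))) * f' a) := by
  -- replace `w` by its (globally integrable) truncation to `[a, b]`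
  set wt : ℝ → ℝ := (Set.uIcc a b).indicator w with hwt_def
  have hwInt : IntegrableOn w (Set.uIcc a b) volume := by
    rw [Set.uIcc_of_le hab.le, integrableOn_Icc_iff_integrableOn_Ioc]
    simpa [intervalIntegrable_iff, Set.uIoc_of_le hab.le] using hw.1
  have hwt : Integrable wt (volume : Measure ℝ) :=
    hwInt.integrable_indicator measurableSet_uIcc
  have hwt_eq : ∀ x ∈ Set.uIcc a b, wt x = w x := fun x hx => Set.indicator_of_mem hx w
  -- congruence lemmas replacing `w` by `wt` in all integrals appearing in the statement
  have hcongr : ∀ u v : ℝ, u ∈ Set.uIcc a b → v ∈ Set.uIcc a b → ∀ φ : ℝ → ℝ,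
      (∫ ξ in u..v, w ξ * φ ξ) = ∫ ξ in u..v, wt ξ * φ ξ := by
    intro u v hu hv φ
    refine intervalIntegral.integral_congr fun ξ hξ => ?_
    have : ξ ∈ Set.uIcc a b := Set.uIcc_subset_uIcc hu hv hξ
    rw [hwt_eq ξ this]
  have hmema : a ∈ Set.uIcc a b := Set.left_mem_uIcc
  have hmemb : b ∈ Set.uIcc a b := Set.right_mem_uIcc
  -- notation
  set W : ℝ → ℝ := fun x => ∫ ξ in a..x, wt ξ with hW_def
  set V : ℝ → ℝ := fun x => ∫ ξ in b..x, wt ξ with hV_def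
  set Θ : ℝ → ℝ := fun x => (∫ ξ in a..x, wt ξ * (x - ξ)) + ∫ ξ in b..x, wt ξ * (x - ξ)
    with hΘ_def
  have hΘderiv : ∀ x, HasDerivAt Θ (W x + V x) x := fun x =>
    (prim_deriv_aux hwt a x).add (prim_deriv_aux hwt b x)
  have hWc : Continuous W := hwt.continuous_primitive a
  have hVc : Continuous V := hwt.continuous_primitive b
  have hf'c : Continuous f' := continuous_iff_continuousAt.2 fun x => (hf' x).continuousAt
  have hfc : Continuous f := continuous_iff_continuousAt.2 fun x => (hf x).continuousAt
  -- integration by parts for the right-hand side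
  have parts : ∫ x in a..b, Θ x * f'' x
      = Θ b * f' b - Θ a * f' a - ∫ x in a..b, (W x + V x) * f' x := by
    refine intervalIntegral.integral_mul_deriv_eq_deriv_mul
      (fun x _ => hΘderiv x) (fun x _ => hf' x) ?_ hf''
    exact ((hWc.add hVc).intervalIntegrable a b)
  -- FTC applications to compute ∫ (W+V) f'
  have ftcW : ∫ x in a..b, f' x * W x
      = (W b * f b - ∫ x in a..b, wt x * f x) - (W a * f a - ∫ x in a..a, wt x * f x) := by
    exact intervalIntegral.integral_eq_sub_of_hasDerivAt
      (fun x _ => prim_parts_aux hwt hf hf'c a x)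
      (((hf'c.mul hWc).intervalIntegrable a b))
  have ftcV : ∫ x in a..b, f' x * V x
      = (V b * f b - ∫ x in b..b, wt x * f x) - (V a * f a - ∫ x in b..a, wt x * f x) := by
    exact intervalIntegral.integral_eq_sub_of_hasDerivAt
      (fun x _ => prim_parts_aux hwt hf hf'c b x)
      (((hf'c.mul hVc).intervalIntegrable a b))
  have hWa : W a = 0 := intervalIntegral.integral_same
  have hVb : V b = 0 := intervalIntegral.integral_same
  have hVa : V a = -W b := by
    simp only [hW_def, hV_def]
    rw [intervalIntegral.integral_symm]
  have hba : (∫ x in b..a, wt x * f x) = -∫ x in a..b, wt x * f x :=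
    intervalIntegral.integral_symm a b
  have hWV : ∫ x in a..b, (W x + V x) * f' x
      = W b * f b + W b * f a - 2 * ∫ x in a..b, wt x * f x := by
    have e : ∀ x, (W x + V x) * f' x = f' x * W x + f' x * V x := fun x => by ring
    simp_rw [e]
    rw [intervalIntegral.integral_add (f := fun x => f' x * W x) (g := fun x => f' x * V x) ((hf'c.mul hWc).intervalIntegrable a b)
      ((hf'c.mul hVc).intervalIntegrable a b), ftcW, ftcV]
    simp only [intervalIntegral.integral_same, hWa, hVb, hVa, hba]
    ring
  -- compute the left-hand side
  have hwtf : IntervalIntegrable (fun x => wt x * f x) volume a b :=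
    hwt.intervalIntegrable.mul_continuousOn hfc.continuousOn
  have hLHS : (∫ x in a..b, (2 * f x - f a - f b) * w x)
      = 2 * (∫ x in a..b, wt x * f x) - (f a + f b) * W b := by
    have e1 : (∫ x in a..b, (2 * f x - f a - f b) * w x)
        = ∫ x in a..b, (2 * f x - f a - f b) * wt x := by
      refine intervalIntegral.integral_congr fun x hx => ?_
      rw [hwt_eq x hx]
    rw [e1]
    have e2 : ∀ x, (2 * f x - f a - f b) * wt x
        = 2 * (wt x * f x) - (f a + f b) * wt x := fun x => by ring
    simp_rw [e2]
    rw [intervalIntegral.integral_sub (hwtf.const_mul 2)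
      (hwt.intervalIntegrable.const_mul _)]
    rw [intervalIntegral.integral_const_mul, intervalIntegral.integral_const_mul]
  -- put everything together
  have hΘb : ((∫ ξ in a..b, w ξ * (b - ξ)) + ∫ ξ in b..b, w ξ * (b - ξ)) = Θ b := by
    rw [hcongr a b hmema hmemb (fun ξ => b - ξ), hcongr b b hmemb hmemb (fun ξ => b - ξ)]
  have hΘa : ((∫ ξ in a..a, w ξ * (a - ξ)) + ∫ ξ in b..a, w ξ * (a - ξ)) = Θ a := by
    rw [hcongr a a hmema hmema (fun ξ => a - ξ), hcongr b a hmemb hmema (fun ξ => a - ξ)]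
  have hΘint : (∫ x in a..b, ((∫ ξ in a..x, w ξ * (x - ξ)) + ∫ ξ in b..x, w ξ * (x - ξ)) * f'' x)
      = ∫ x in a..b, Θ x * f'' x := by
    refine intervalIntegral.integral_congr fun x hx => ?_
    rw [hcongr a x hmema hx (fun ξ => x - ξ), hcongr b x hmemb hx (fun ξ => x - ξ)]
  rw [hΘb, hΘa, hΘint, parts, hLHS, hWV]
  ring
end

section
/- Let u : ℝ → ℝ be continuously differentiable with u' uniformly Hölder continuous with exponent s ∈ (0,1], and let γ ∈ (0, 2]. Define φ_γ(x,ξ) = (u(x-ξ) - 2u(x) + u(x+ξ))/ξ^γ for ξ > 0. Then φ_γ is differentiable in ξ on (0,∞) and there exists C > 0 such that |∂_ξ φ_γ(x,ξ)| ≤ C ξ^{s-γ} for all ξ > 0. -/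
open Real

theorem stmt_5 (u u' : ℝ → ℝ) (s K γ : ℝ) (hs : s ∈ Set.Ioc (0:ℝ) 1)
    (hγ : γ ∈ Set.Ioc (0:ℝ) 2)
    (hu : ∀ x, HasDerivAt u (u' x) x)
    (hu' : ∀ x y : ℝ, |u' x - u' y| ≤ K * |x - y| ^ s) :
    (∀ x ξ : ℝ, 0 < ξ →
      DifferentiableAt ℝ (fun ξ => (u (x - ξ) - 2 * u x + u (x + ξ)) / ξ ^ γ) ξ) ∧
    ∃ C > 0, ∀ x ξ : ℝ, 0 < ξ →
      |deriv (fun ξ => (u (x - ξ) - 2 * u x + u (x + ξ)) / ξ ^ γ) ξ| ≤ C * ξ ^ (s - γ) := by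
  obtain ⟨hs0, hs1⟩ := hs
  obtain ⟨hγ0, hγ2⟩ := hγ
  have hK : 0 ≤ K := by
    have h := hu' 0 1
    simp at h
    exact le_trans (abs_nonneg _) h
  have key : ∀ x ξ : ℝ, 0 < ξ →
      HasDerivAt (fun ξ => (u (x - ξ) - 2 * u x + u (x + ξ)) / ξ ^ γ)
        ((u' (x + ξ) - u' (x - ξ)) / ξ ^ γ
          - γ * (u (x - ξ) - 2 * u x + u (x + ξ)) / ξ ^ (γ + 1)) ξ := by
    intro x ξ hξ
    have h1 : HasDerivAt (fun ξ : ℝ => u (x - ξ)) (-u' (x - ξ)) ξ := by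
      have := (hu (x - ξ)).comp ξ ((hasDerivAt_id ξ).const_sub x)
      simpa [Function.comp_def] using this
    have h2 : HasDerivAt (fun ξ : ℝ => u (x + ξ)) (u' (x + ξ)) ξ := by
      have := (hu (x + ξ)).comp ξ ((hasDerivAt_id ξ).const_add x)
      simpa [Function.comp_def] using this
    have hnum : HasDerivAt (fun ξ : ℝ => u (x - ξ) - 2 * u x + u (x + ξ))
        (-u' (x - ξ) + u' (x + ξ)) ξ := (h1.sub_const (2 * u x)).add h2
    have hden : HasDerivAt (fun ξ : ℝ => ξ ^ γ) (γ * ξ ^ (γ - 1)) ξ :=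
      Real.hasDerivAt_rpow_const (Or.inl hξ.ne')
    have hden0 : (ξ : ℝ) ^ γ ≠ 0 := (Real.rpow_pos_of_pos hξ γ).ne'
    have := hnum.div hden hden0
    refine HasDerivAt.congr_deriv this ?_
    have e1 : ξ ^ (γ - 1) = ξ ^ γ / ξ := Real.rpow_sub_one hξ.ne' γ
    have e2 : ξ ^ (γ + 1) = ξ ^ γ * ξ := Real.rpow_add_one hξ.ne' γ
    rw [e1, e2]
    field_simp
    ring
  refine ⟨fun x ξ hξ => (key x ξ hξ).differentiableAt, (1 + γ) * (K * 2 ^ s) + 1, by positivity,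
    fun x ξ hξ => ?_⟩
  rw [(key x ξ hξ).deriv]
  set A := K * 2 ^ s with hA
  have hA0 : 0 ≤ A := by positivity
  have h2s : (0:ℝ) < 2 ^ s := Real.rpow_pos_of_pos two_pos s
  -- Hölder bound for the derivative difference
  have hdiff : ∀ t : ℝ, 0 ≤ t → t ≤ ξ → |u' (x + t) - u' (x - t)| ≤ A * ξ ^ s := by
    intro t ht htξ
    have h := hu' (x + t) (x - t)
    have e : x + t - (x - t) = 2 * t := by ring
    rw [e] at h
    have habs : |2 * t| = 2 * t := abs_of_nonneg (by linarith)
    rw [habs] at h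
    have e2 : (2 * t) ^ s = 2 ^ s * t ^ s := Real.mul_rpow (by norm_num) ht
    rw [e2] at h
    have hts : t ^ s ≤ ξ ^ s := Real.rpow_le_rpow ht htξ hs0.le
    calc |u' (x + t) - u' (x - t)| ≤ K * (2 ^ s * t ^ s) := h
      _ ≤ K * (2 ^ s * ξ ^ s) := by
          apply mul_le_mul_of_nonneg_left _ hK
          exact mul_le_mul_of_nonneg_left hts h2s.le
      _ = A * ξ ^ s := by rw [hA]; ring
  -- bound on the numerator via MVT
  have hg : |u (x - ξ) - 2 * u x + u (x + ξ)| ≤ A * ξ ^ s * ξ := by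
    have hconv : Convex ℝ (Set.Icc (0:ℝ) ξ) := convex_Icc _ _
    have hderiv : ∀ t ∈ Set.Icc (0:ℝ) ξ,
        HasDerivWithinAt (fun t : ℝ => u (x - t) - 2 * u x + u (x + t))
          (-u' (x - t) + u' (x + t)) (Set.Icc (0:ℝ) ξ) t := by
      intro t _
      have h1 : HasDerivAt (fun t : ℝ => u (x - t)) (-u' (x - t)) t := by
        have := (hu (x - t)).comp t ((hasDerivAt_id t).const_sub x)
        simpa [Function.comp_def] using this
      have h2 : HasDerivAt (fun t : ℝ => u (x + t)) (u' (x + t)) t := by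
        have := (hu (x + t)).comp t ((hasDerivAt_id t).const_add x)
        simpa [Function.comp_def] using this
      exact (((h1.sub_const (2 * u x)).add h2)).hasDerivWithinAt
    have hbound : ∀ t ∈ Set.Icc (0:ℝ) ξ, ‖-u' (x - t) + u' (x + t)‖ ≤ A * ξ ^ s := by
      intro t ht
      have := hdiff t ht.1 ht.2
      rw [Real.norm_eq_abs]
      rw [neg_add_eq_sub]
      exact this
    have := hconv.norm_image_sub_le_of_norm_hasDerivWithin_le hderiv hbound
      (Set.left_mem_Icc.2 hξ.le) (Set.right_mem_Icc.2 hξ.le)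
    simp only [Real.norm_eq_abs, sub_zero] at this
    have e0 : u (x - ξ) - 2 * u x + u (x + ξ) - (u x - 2 * u x + u (x + 0))
        = u (x - ξ) - 2 * u x + u (x + ξ) := by rw [add_zero]; ring
    rw [e0, abs_of_pos hξ] at this
    exact this
  have hξγ : (0:ℝ) < ξ ^ γ := Real.rpow_pos_of_pos hξ γ
  have hξγ1 : (0:ℝ) < ξ ^ (γ + 1) := Real.rpow_pos_of_pos hξ (γ + 1)
  have hξs : (0:ℝ) < ξ ^ s := Real.rpow_pos_of_pos hξ s
  have hsg : ξ ^ (s - γ) = ξ ^ s / ξ ^ γ := Real.rpow_sub hξ s γ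
  have e2 : ξ ^ (γ + 1) = ξ ^ γ * ξ := Real.rpow_add_one hξ.ne' γ
  have hterm1 : |(u' (x + ξ) - u' (x - ξ)) / ξ ^ γ| ≤ A * ξ ^ (s - γ) := by
    rw [abs_div, abs_of_pos hξγ, div_le_iff₀ hξγ, hsg]
    have := hdiff ξ hξ.le le_rfl
    calc |u' (x + ξ) - u' (x - ξ)| ≤ A * ξ ^ s := this
      _ = A * (ξ ^ s / ξ ^ γ) * ξ ^ γ := by field_simp
  have hterm2 : |γ * (u (x - ξ) - 2 * u x + u (x + ξ)) / ξ ^ (γ + 1)| ≤ γ * A * ξ ^ (s - γ) := by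
    rw [abs_div, abs_of_pos hξγ1, div_le_iff₀ hξγ1, abs_mul, abs_of_pos hγ0, e2, hsg]
    calc γ * |u (x - ξ) - 2 * u x + u (x + ξ)| ≤ γ * (A * ξ ^ s * ξ) :=
          mul_le_mul_of_nonneg_left hg hγ0.le
      _ = γ * A * (ξ ^ s / ξ ^ γ) * (ξ ^ γ * ξ) := by field_simp
  have hξsg : (0:ℝ) < ξ ^ (s - γ) := Real.rpow_pos_of_pos hξ (s - γ)
  calc |(u' (x + ξ) - u' (x - ξ)) / ξ ^ γ
        - γ * (u (x - ξ) - 2 * u x + u (x + ξ)) / ξ ^ (γ + 1)|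
      ≤ |(u' (x + ξ) - u' (x - ξ)) / ξ ^ γ|
        + |γ * (u (x - ξ) - 2 * u x + u (x + ξ)) / ξ ^ (γ + 1)| := abs_sub _ _
    _ ≤ A * ξ ^ (s - γ) + γ * A * ξ ^ (s - γ) := add_le_add hterm1 hterm2
    _ = (1 + γ) * A * ξ ^ (s - γ) := by ring
    _ ≤ ((1 + γ) * A + 1) * ξ ^ (s - γ) := by nlinarith
end

section
/- Let u : ℝ → ℝ be twice continuously differentiable with u'' uniformly Hölder continuous with exponent s ∈ (0,1]. Define φ_2(x,ξ) = (u(x-ξ) - 2u(x) + u(x+ξ))/ξ^2 for ξ > 0. Then there exists C > 0 such that |∂_ξ φ_2(x,ξ)| ≤ C ξ^{s-1} for all ξ > 0. -/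
theorem stmt_6 (u : ℝ → ℝ) (s K : ℝ) (hs : s ∈ Set.Ioc (0:ℝ) 1)
    (hu : ContDiff ℝ 2 u)
    (hu'' : ∀ x y : ℝ, |iteratedDeriv 2 u x - iteratedDeriv 2 u y| ≤ K * |x - y| ^ s) :
    ∃ C > 0, ∀ x ξ : ℝ, 0 < ξ →
      |deriv (fun ξ => (u (x - ξ) - 2 * u x + u (x + ξ)) / ξ ^ 2) ξ| ≤ C * ξ ^ (s - 1) := by
  obtain ⟨hs0, hs1⟩ := hs
  set f' := deriv u with hf'
  set f'' := deriv (deriv u) with hf''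
  have hI2 : iteratedDeriv 2 u = f'' := by
    rw [iteratedDeriv_succ, iteratedDeriv_one]
  have hH : ∀ a b : ℝ, |f'' a - f'' b| ≤ K * |a - b| ^ s := by
    intro a b; have := hu'' a b; rwa [hI2] at this
  have hK : 0 ≤ K := by
    have := hH 1 0
    have h1 : |(1:ℝ) - 0| ^ s = 1 := by norm_num
    rw [h1, mul_one] at this
    exact le_trans (abs_nonneg _) this
  have hpow : ∀ (ξ : ℝ), 0 < ξ → ∀ (a : ℝ) (n : ℕ), ξ ^ (a + (n : ℝ)) = ξ ^ a * ξ ^ n := by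
    intro ξ hξ a n
    rw [Real.rpow_add hξ, Real.rpow_natCast]
  have hd1 : Differentiable ℝ u := hu.differentiable (by norm_num)
  have hu1 : ContDiff ℝ 1 (deriv u) := by
    have := (contDiff_succ_iff_deriv (n := 1)).mp (by exact_mod_cast hu)
    exact this.2.2
  have hd2 : Differentiable ℝ f' := hu1.differentiable (by norm_num)
  have hc2 : Continuous f'' := by
    have := (contDiff_succ_iff_deriv (n := 0)).mp (by exact_mod_cast hu1)
    exact this.2.2.continuous
  -- derivative of translates
  have hderR : ∀ x ξ : ℝ, HasDerivAt (fun t : ℝ => u (x + t)) (f' (x + ξ)) ξ := by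
    intro x ξ
    have := ((hd1 (x + ξ)).hasDerivAt).comp ξ ((hasDerivAt_id ξ).const_add x)
    simpa [Function.comp_def] using this
  have hderL : ∀ x ξ : ℝ, HasDerivAt (fun t : ℝ => u (x - t)) (-(f' (x - ξ))) ξ := by
    intro x ξ
    have := ((hd1 (x - ξ)).hasDerivAt).comp ξ ((hasDerivAt_id ξ).const_sub x)
    simpa [Function.comp_def] using this
  -- Key estimate A
  have keyA : ∀ x t : ℝ, 0 < t →
      |f' (x + t) - f' (x - t) - 2 * t * f'' x| ≤ 2 * K * t ^ (1 + s) := by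
    intro x t ht
    have hle : x - t ≤ x + t := by linarith
    have hint : IntervalIntegrable f'' MeasureTheory.volume (x - t) (x + t) :=
      hc2.intervalIntegrable _ _
    have hsub : (∫ y in (x - t)..(x + t), f'' y) = f' (x + t) - f' (x - t) :=
      intervalIntegral.integral_eq_sub_of_hasDerivAt (fun y _ => (hd2 y).hasDerivAt) hint
    have hconst : (∫ y in (x - t)..(x + t), f'' x) = 2 * t * f'' x := by
      rw [intervalIntegral.integral_const, smul_eq_mul]; ring
    have hdiff : f' (x + t) - f' (x - t) - 2 * t * f'' x
        = ∫ y in (x - t)..(x + t), (f'' y - f'' x) := by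
      rw [intervalIntegral.integral_sub hint (intervalIntegrable_const), hsub, hconst]
    rw [hdiff]
    have hbd : ∀ y ∈ Set.uIoc (x - t) (x + t), ‖f'' y - f'' x‖ ≤ K * t ^ s := by
      intro y hy
      rw [Set.uIoc_of_le hle] at hy
      have h1 : |y - x| ≤ t := abs_le.mpr ⟨by linarith [hy.1], by linarith [hy.2]⟩
      calc ‖f'' y - f'' x‖ ≤ K * |y - x| ^ s := hH y x
        _ ≤ K * t ^ s :=
            mul_le_mul_of_nonneg_left (Real.rpow_le_rpow (abs_nonneg _) h1 hs0.le) hK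
    have := intervalIntegral.norm_integral_le_of_norm_le_const hbd
    have habs : |x + t - (x - t)| = 2 * t := by rw [abs_of_pos (by linarith)]; ring
    rw [habs] at this
    calc ‖∫ y in (x - t)..(x + t), (f'' y - f'' x)‖ ≤ K * t ^ s * (2 * t) := this
      _ = 2 * K * t ^ (1 + s) := by
          rw [Real.rpow_add ht, Real.rpow_one]; ring
  -- Key estimate B
  have keyB : ∀ x ξ : ℝ, 0 < ξ →
      |u (x - ξ) - 2 * u x + u (x + ξ) - ξ ^ 2 * f'' x| ≤ 2 * K * ξ ^ (2 + s) := by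
    intro x ξ hξ
    set g : ℝ → ℝ := fun t => u (x - t) - 2 * u x + u (x + t) - t ^ 2 * f'' x with hg
    have hgd : ∀ t : ℝ, HasDerivAt g (f' (x + t) - f' (x - t) - 2 * t * f'' x) t := by
      intro t
      have h1 := ((hderL x t).sub_const (2 * u x)).add (hderR x t)
      have h2 : HasDerivAt (fun t : ℝ => t ^ 2 * f'' x) (2 * t * f'' x) t := by
        simpa [mul_comm] using (hasDerivAt_pow 2 t).mul_const (f'' x)
      have := h1.sub h2
      exact this.congr_deriv (by ring)
    have hcont : Continuous fun t : ℝ => f' (x + t) - f' (x - t) - 2 * t * f'' x := by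
      have hcf : Continuous f' := hd2.continuous
      exact ((hcf.comp (continuous_const.add continuous_id)).sub
        (hcf.comp (continuous_const.sub continuous_id))).sub
        (((continuous_const.mul continuous_id)).mul continuous_const)
    have hsub : (∫ t in (0:ℝ)..ξ, (f' (x + t) - f' (x - t) - 2 * t * f'' x)) = g ξ - g 0 :=
      intervalIntegral.integral_eq_sub_of_hasDerivAt (fun t _ => hgd t)
        (hcont.intervalIntegrable _ _)
    have hg0 : g 0 = 0 := by simp [hg]; ring
    have hbd : ∀ t ∈ Set.uIoc (0:ℝ) ξ, ‖f' (x + t) - f' (x - t) - 2 * t * f'' x‖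
        ≤ 2 * K * ξ ^ (1 + s) := by
      intro t htm
      rw [Set.uIoc_of_le hξ.le] at htm
      calc ‖f' (x + t) - f' (x - t) - 2 * t * f'' x‖ ≤ 2 * K * t ^ (1 + s) :=
            keyA x t htm.1
        _ ≤ 2 * K * ξ ^ (1 + s) :=
            mul_le_mul_of_nonneg_left (Real.rpow_le_rpow htm.1.le htm.2 (by linarith))
              (by linarith)
    have := intervalIntegral.norm_integral_le_of_norm_le_const hbd
    rw [hsub, hg0, sub_zero] at this
    have : ‖g ξ‖ ≤ 2 * K * ξ ^ (1 + s) * ξ := by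
      simpa [abs_of_pos hξ] using this
    calc |u (x - ξ) - 2 * u x + u (x + ξ) - ξ ^ 2 * f'' x| = ‖g ξ‖ := rfl
      _ ≤ 2 * K * ξ ^ (1 + s) * ξ := this
      _ = 2 * K * ξ ^ (2 + s) := by
          rw [show (2 + s : ℝ) = (1 + s) + ((1 : ℕ) : ℝ) by push_cast; ring, hpow ξ hξ]
          ring
  -- conclusion
  refine ⟨6 * K + 1, by positivity, fun x ξ hξ => ?_⟩
  have hne : (ξ : ℝ) ^ 2 ≠ 0 := pow_ne_zero _ hξ.ne'
  have hN : HasDerivAt (fun t : ℝ => u (x - t) - 2 * u x + u (x + t))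
      (f' (x + ξ) - f' (x - ξ)) ξ := by
    have := ((hderL x ξ).sub_const (2 * u x)).add (hderR x ξ)
    exact this.congr_deriv (by ring)
  have hder : deriv (fun ξ => (u (x - ξ) - 2 * u x + u (x + ξ)) / ξ ^ 2) ξ
      = ((f' (x + ξ) - f' (x - ξ)) * ξ ^ 2
        - (u (x - ξ) - 2 * u x + u (x + ξ)) * (2 * ξ)) / (ξ ^ 2) ^ 2 := by
    have := (hN.div (hasDerivAt_pow 2 ξ) hne).deriv
    exact this.trans (by norm_num)
  rw [hder]
  set A := f' (x + ξ) - f' (x - ξ) - 2 * ξ * f'' x with hA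
  set B := u (x - ξ) - 2 * u x + u (x + ξ) - ξ ^ 2 * f'' x with hB
  have hAb : |A| ≤ 2 * K * ξ ^ (1 + s) := keyA x ξ hξ
  have hBb : |B| ≤ 2 * K * ξ ^ (2 + s) := keyB x ξ hξ
  have hrw : ((f' (x + ξ) - f' (x - ξ)) * ξ ^ 2
        - (u (x - ξ) - 2 * u x + u (x + ξ)) * (2 * ξ)) / (ξ ^ 2) ^ 2
      = A / ξ ^ 2 - 2 * B / ξ ^ 3 := by
    field_simp [hA, hB]
    ring
  rw [hrw]
  set r := ξ ^ (s - 1) with hr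
  have hr0 : 0 < r := Real.rpow_pos_of_pos hξ _
  have h1s : ξ ^ (1 + s) = r * ξ ^ 2 := by
    rw [hr, show (1 + s : ℝ) = (s - 1) + ((2 : ℕ) : ℝ) by push_cast; ring, hpow ξ hξ]
  have h2s : ξ ^ (2 + s) = r * ξ ^ 3 := by
    rw [hr, show (2 + s : ℝ) = (s - 1) + ((3 : ℕ) : ℝ) by push_cast; ring, hpow ξ hξ]
  rw [h1s] at hAb; rw [h2s] at hBb
  have hA2 : |A / ξ ^ 2| ≤ 2 * K * r := by
    rw [abs_div, abs_of_pos (by positivity : (0:ℝ) < ξ ^ 2), div_le_iff₀ (by positivity)]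
    calc |A| ≤ 2 * K * (r * ξ ^ 2) := hAb
      _ = 2 * K * r * ξ ^ 2 := by ring
  have hB2 : |2 * B / ξ ^ 3| ≤ 4 * K * r := by
    rw [abs_div, abs_of_pos (by positivity : (0:ℝ) < ξ ^ 3), div_le_iff₀ (by positivity),
      abs_mul, abs_of_nonneg (by norm_num : (0:ℝ) ≤ 2)]
    calc 2 * |B| ≤ 2 * (2 * K * (r * ξ ^ 3)) := by linarith
      _ = 4 * K * r * ξ ^ 3 := by ring
  calc |A / ξ ^ 2 - 2 * B / ξ ^ 3| ≤ |A / ξ ^ 2| + |2 * B / ξ ^ 3| := abs_sub _ _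
    _ ≤ 2 * K * r + 4 * K * r := by linarith
    _ ≤ (6 * K + 1) * r := by nlinarith
end

section
/- Let u : ℝ → ℝ be three times continuously differentiable with u''' uniformly Hölder continuous with exponent s ∈ (0,1]. Define φ_2(x,ξ) = (u(x-ξ) - 2u(x) + u(x+ξ))/ξ^2 for ξ > 0. Then there exists C > 0 such that |∂²_ξ φ_2(x,ξ)| ≤ C ξ^{s-1} for all ξ > 0. -/
open Set Real

/-- Mean value inequality on `[[a,b]]`. -/
lemma mvt_abs (f g : ℝ → ℝ) (a b M : ℝ)
    (hf : ∀ t, HasDerivAt f (g t) t)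
    (hM : ∀ t ∈ Set.uIcc a b, |g t| ≤ M) :
    |f b - f a| ≤ M * |b - a| := by
  have := Convex.norm_image_sub_le_of_norm_hasDerivWithin_le
    (f := f) (f' := g) (C := M) (s := Set.uIcc a b)
    (fun t ht => (hf t).hasDerivWithinAt)
    (fun t ht => by simpa [Real.norm_eq_abs] using hM t ht)
    (convex_uIcc a b) Set.left_mem_uIcc Set.right_mem_uIcc
  simpa [Real.norm_eq_abs] using this

theorem stmt_7 (u : ℝ → ℝ) (s K : ℝ) (hs : s ∈ Set.Ioc (0:ℝ) 1)
    (hu : ContDiff ℝ 3 u)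
    (hu''' : ∀ x y : ℝ, |iteratedDeriv 3 u x - iteratedDeriv 3 u y| ≤ K * |x - y| ^ s) :
    ∃ C > 0, ∀ x ξ : ℝ, 0 < ξ →
      |deriv (deriv (fun ξ => (u (x - ξ) - 2 * u x + u (x + ξ)) / ξ ^ 2)) ξ| ≤
        C * ξ ^ (s - 1) := by
  obtain ⟨hs0, hs1⟩ := hs
  set u1 := deriv u with hu1def
  set u2 := deriv u1 with hu2def
  set u3 := deriv u2 with hu3def
  have hu1c : ContDiff ℝ 2 u1 := by
    have : ContDiff ℝ ((2:WithTop ℕ∞) + 1) u := by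
      convert hu using 2; norm_num
    exact (contDiff_succ_iff_deriv.mp this).2.2
  have hu2c : ContDiff ℝ 1 u2 := by
    have : ContDiff ℝ ((1:WithTop ℕ∞) + 1) u1 := by
      convert hu1c using 2; norm_num
    exact (contDiff_succ_iff_deriv.mp this).2.2
  have hdu : Differentiable ℝ u := hu.differentiable (by norm_num)
  have hdu1 : Differentiable ℝ u1 := hu1c.differentiable (by norm_num)
  have hdu2 : Differentiable ℝ u2 := (contDiff_one_iff_deriv.mp hu2c).1
  have hd0 : ∀ t, HasDerivAt u (u1 t) t := fun t => (hdu t).hasDerivAt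
  have hd1 : ∀ t, HasDerivAt u1 (u2 t) t := fun t => (hdu1 t).hasDerivAt
  have hd2 : ∀ t, HasDerivAt u2 (u3 t) t := fun t => (hdu2 t).hasDerivAt
  have hiter : iteratedDeriv 3 u = u3 := by
    simp [iteratedDeriv_succ, iteratedDeriv_zero, hu1def, hu2def, hu3def]
  have hH : ∀ x y : ℝ, |u3 x - u3 y| ≤ K * |x - y| ^ s := by
    intro x y; have := hu''' x y; rwa [hiter] at this
  have hK0 : 0 ≤ K := by
    have := hH 1 0
    have h1 : |(1:ℝ) - 0| ^ s = 1 := by norm_num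
    rw [h1, mul_one] at this
    exact le_trans (abs_nonneg _) this
  -- Taylor estimates
  have T1 : ∀ a b : ℝ, |u2 b - u2 a - (b - a) * u3 a| ≤ K * |b - a| ^ s * |b - a| := by
    intro a b
    have h := mvt_abs (fun t => u2 t - t * u3 a) (fun t => u3 t - u3 a) a b
      (K * |b - a| ^ s)
      (fun t => by
        exact ((hd2 t).sub ((hasDerivAt_id t).mul_const (u3 a))).congr_deriv (by ring))
      (fun t ht => by
        refine (hH t a).trans ?_
        have habs : |t - a| ≤ |b - a| := abs_sub_left_of_mem_uIcc ht
        exact mul_le_mul_of_nonneg_left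
          (Real.rpow_le_rpow (abs_nonneg _) habs hs0.le) hK0)
    have e : (u2 b - b * u3 a) - (u2 a - a * u3 a) = u2 b - u2 a - (b - a) * u3 a := by ring
    rwa [e] at h
  have T2 : ∀ a b : ℝ, |u1 b - u1 a - (b - a) * u2 a - (b - a) ^ 2 / 2 * u3 a|
      ≤ K * |b - a| ^ s * |b - a| ^ 2 := by
    intro a b
    have h := mvt_abs (fun t => u1 t - t * u2 a - (t - a) ^ 2 / 2 * u3 a)
      (fun t => u2 t - u2 a - (t - a) * u3 a) a b
      (K * |b - a| ^ s * |b - a|)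
      (fun t => by
        have hder := ((hd1 t).sub ((hasDerivAt_id t).mul_const (u2 a))).sub
          (((((hasDerivAt_id t).sub_const a).pow 2).div_const 2).mul_const (u3 a))
        exact hder.congr_deriv (by simp only [id_eq]; push_cast; ring))
      (fun t ht => by
        refine (T1 a t).trans ?_
        have habs : |t - a| ≤ |b - a| := abs_sub_left_of_mem_uIcc ht
        have h1 : K * |t - a| ^ s ≤ K * |b - a| ^ s :=
          mul_le_mul_of_nonneg_left (Real.rpow_le_rpow (abs_nonneg _) habs hs0.le) hK0
        exact mul_le_mul h1 habs (abs_nonneg _)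
          (mul_nonneg hK0 (Real.rpow_nonneg (abs_nonneg _) _)))
    have e : (u1 b - b * u2 a - (b - a) ^ 2 / 2 * u3 a)
        - (u1 a - a * u2 a - (a - a) ^ 2 / 2 * u3 a)
        = u1 b - u1 a - (b - a) * u2 a - (b - a) ^ 2 / 2 * u3 a := by ring
    rw [e] at h
    exact h.trans (le_of_eq (by ring))
  have T3 : ∀ a b : ℝ, |u b - u a - (b - a) * u1 a - (b - a) ^ 2 / 2 * u2 a
      - (b - a) ^ 3 / 6 * u3 a| ≤ K * |b - a| ^ s * |b - a| ^ 3 := by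
    intro a b
    have h := mvt_abs
      (fun t => u t - t * u1 a - (t - a) ^ 2 / 2 * u2 a - (t - a) ^ 3 / 6 * u3 a)
      (fun t => u1 t - u1 a - (t - a) * u2 a - (t - a) ^ 2 / 2 * u3 a) a b
      (K * |b - a| ^ s * |b - a| ^ 2)
      (fun t => by
        have hder := (((hd0 t).sub ((hasDerivAt_id t).mul_const (u1 a))).sub
          (((((hasDerivAt_id t).sub_const a).pow 2).div_const 2).mul_const (u2 a))).sub
          (((((hasDerivAt_id t).sub_const a).pow 3).div_const 6).mul_const (u3 a))
        exact hder.congr_deriv (by simp only [id_eq]; push_cast; ring))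
      (fun t ht => by
        refine (T2 a t).trans ?_
        have habs : |t - a| ≤ |b - a| := abs_sub_left_of_mem_uIcc ht
        have h1 : K * |t - a| ^ s ≤ K * |b - a| ^ s :=
          mul_le_mul_of_nonneg_left (Real.rpow_le_rpow (abs_nonneg _) habs hs0.le) hK0
        exact mul_le_mul h1 (pow_le_pow_left₀ (abs_nonneg _) habs 2)
          (pow_nonneg (abs_nonneg _) 2)
          (mul_nonneg hK0 (Real.rpow_nonneg (abs_nonneg _) _)))
    have e : (u b - b * u1 a - (b - a) ^ 2 / 2 * u2 a - (b - a) ^ 3 / 6 * u3 a)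
        - (u a - a * u1 a - (a - a) ^ 2 / 2 * u2 a - (a - a) ^ 3 / 6 * u3 a)
        = u b - u a - (b - a) * u1 a - (b - a) ^ 2 / 2 * u2 a - (b - a) ^ 3 / 6 * u3 a := by
      ring
    rw [e] at h
    exact h.trans (le_of_eq (by ring))
  refine ⟨22 * K + 1, by linarith, fun x XI hXI => ?_⟩
  have habsXI : |XI| = XI := abs_of_pos hXI
  -- derivative formulas
  have hxm : ∀ t : ℝ, HasDerivAt (fun t => u (x - t)) (-u1 (x - t)) t := fun t => by
    exact ((hd0 (x - t)).comp t ((hasDerivAt_id t).const_sub x)).congr_deriv (by ring)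
  have hxp : ∀ t : ℝ, HasDerivAt (fun t => u (x + t)) (u1 (x + t)) t := fun t => by
    exact ((hd0 (x + t)).comp t ((hasDerivAt_id t).const_add x)).congr_deriv (by ring)
  have hg : ∀ t, HasDerivAt (fun t => u (x - t) - 2 * u x + u (x + t))
      (-u1 (x - t) + u1 (x + t)) t := fun t => ((hxm t).sub_const (2 * u x)).add (hxp t)
  have hg1 : ∀ t, HasDerivAt (fun t => -u1 (x - t) + u1 (x + t))
      (u2 (x - t) + u2 (x + t)) t := fun t => by
    have a1 := ((hd1 (x - t)).comp t ((hasDerivAt_id t).const_sub x)).neg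
    have a2 := (hd1 (x + t)).comp t ((hasDerivAt_id t).const_add x)
    exact (a1.add a2).congr_deriv (by ring)
  set F : ℝ → ℝ := fun t => ((-u1 (x - t) + u1 (x + t)) * t ^ 2
      - (u (x - t) - 2 * u x + u (x + t)) * (2 * t)) / t ^ 4 with hFdef
  have hF : ∀ t ∈ Set.Ioi (0:ℝ), HasDerivAt
      (fun t => (u (x - t) - 2 * u x + u (x + t)) / t ^ 2) (F t) t := by
    intro t ht
    have hd := (hg t).div (hasDerivAt_pow 2 t) (pow_ne_zero 2 (ne_of_gt ht))
    have htne : (t:ℝ) ≠ 0 := ne_of_gt (Set.mem_Ioi.mp ht)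
    refine hd.congr_deriv ?_
    rw [hFdef]
    push_cast
    ring
  have heq : deriv (fun t : ℝ => (u (x - t) - 2 * u x + u (x + t)) / t ^ 2) =ᶠ[nhds XI] F :=
    Filter.eventuallyEq_of_mem (Ioi_mem_nhds hXI) (fun t ht => (hF t ht).deriv)
  have hN : HasDerivAt (fun t => ((-u1 (x - t) + u1 (x + t)) * t ^ 2
      - (u (x - t) - 2 * u x + u (x + t)) * (2 * t)))
      ((u2 (x - XI) + u2 (x + XI)) * XI ^ 2 + (-u1 (x - XI) + u1 (x + XI)) * (2 * XI ^ 1)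
        - ((-u1 (x - XI) + u1 (x + XI)) * (2 * XI) + (u (x - XI) - 2 * u x + u (x + XI)) * (2 * 1)))
      XI := by
    have := ((hg1 XI).mul (hasDerivAt_pow 2 XI)).sub ((hg XI).mul ((hasDerivAt_id XI).const_mul 2))
    exact this.congr_deriv (by simp only [id_eq]; push_cast; ring)
  have hF' := hN.div (hasDerivAt_pow 4 XI) (pow_ne_zero 4 (ne_of_gt hXI))
  set A := u2 (x - XI) + u2 (x + XI) - 2 * u2 x with hAdef
  set B := u1 (x + XI) - u1 (x - XI) - 2 * XI * u2 x with hBdef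
  set Cc := u (x - XI) - 2 * u x + u (x + XI) - XI ^ 2 * u2 x with hCdef
  have hXIne : XI ≠ 0 := ne_of_gt hXI
  have hval : deriv F XI = A / XI ^ 2 - 4 * B / XI ^ 3 + 6 * Cc / XI ^ 4 := by
    rw [(show HasDerivAt F _ XI from hF').deriv, hAdef, hBdef, hCdef]
    push_cast
    field_simp
    ring
  have hd2eq : deriv (deriv (fun t : ℝ => (u (x - t) - 2 * u x + u (x + t)) / t ^ 2)) XI
      = A / XI ^ 2 - 4 * B / XI ^ 3 + 6 * Cc / XI ^ 4 := by
    rw [heq.deriv_eq, hval]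
  -- Taylor bounds
  have t1p := T1 x (x + XI); have t1m := T1 x (x - XI)
  rw [show x + XI - x = XI from by ring, habsXI] at t1p
  rw [show x - XI - x = -XI from by ring, abs_neg, habsXI] at t1m
  have t2p := T2 x (x + XI); have t2m := T2 x (x - XI)
  rw [show x + XI - x = XI from by ring, habsXI] at t2p
  rw [show x - XI - x = -XI from by ring, abs_neg, habsXI] at t2m
  have t3p := T3 x (x + XI); have t3m := T3 x (x - XI)
  rw [show x + XI - x = XI from by ring, habsXI] at t3p
  rw [show x - XI - x = -XI from by ring, abs_neg, habsXI] at t3m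
  have hA : |A| ≤ 2 * (K * XI ^ s * XI) := by
    have e : A = (u2 (x + XI) - u2 x - XI * u3 x)
        + (u2 (x - XI) - u2 x - -XI * u3 x) := by rw [hAdef]; ring
    rw [e]
    exact (abs_add_le _ _).trans (by linarith)
  have hB : |B| ≤ 2 * (K * XI ^ s * XI ^ 2) := by
    have e : B = (u1 (x + XI) - u1 x - XI * u2 x - XI ^ 2 / 2 * u3 x)
        - (u1 (x - XI) - u1 x - -XI * u2 x - (-XI) ^ 2 / 2 * u3 x) := by rw [hBdef]; ring
    rw [e]
    exact (abs_sub _ _).trans (by linarith)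
  have hC : |Cc| ≤ 2 * (K * XI ^ s * XI ^ 3) := by
    have e : Cc = (u (x + XI) - u x - XI * u1 x - XI ^ 2 / 2 * u2 x - XI ^ 3 / 6 * u3 x)
        + (u (x - XI) - u x - -XI * u1 x - (-XI) ^ 2 / 2 * u2 x - (-XI) ^ 3 / 6 * u3 x) := by
      rw [hCdef]; ring
    rw [e]
    exact (abs_add_le _ _).trans (by linarith)
  rw [hd2eq]
  have hXIs : (0:ℝ) < XI ^ s := Real.rpow_pos_of_pos hXI s
  have hpow : XI ^ (s - 1) = XI ^ s / XI := by
    rw [Real.rpow_sub hXI, Real.rpow_one]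
  rw [hpow]
  calc |A / XI ^ 2 - 4 * B / XI ^ 3 + 6 * Cc / XI ^ 4|
      ≤ |A / XI ^ 2 - 4 * B / XI ^ 3| + |6 * Cc / XI ^ 4| := abs_add_le _ _
    _ ≤ |A| / XI ^ 2 + 4 * |B| / XI ^ 3 + 6 * |Cc| / XI ^ 4 := by
        have h2 := abs_sub (A / XI ^ 2) (4 * B / XI ^ 3)
        have e1 : |A / XI ^ 2| = |A| / XI ^ 2 := by
          rw [abs_div, abs_of_pos (pow_pos hXI 2)]
        have e2 : |4 * B / XI ^ 3| = 4 * |B| / XI ^ 3 := by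
          rw [abs_div, abs_mul, abs_of_pos (pow_pos hXI 3)]; norm_num
        have e3 : |6 * Cc / XI ^ 4| = 6 * |Cc| / XI ^ 4 := by
          rw [abs_div, abs_mul, abs_of_pos (pow_pos hXI 4)]; norm_num
        rw [e1, e2] at h2
        rw [e3]
        linarith
    _ ≤ (2 * (K * XI ^ s * XI)) / XI ^ 2 + 4 * (2 * (K * XI ^ s * XI ^ 2)) / XI ^ 3
        + 6 * (2 * (K * XI ^ s * XI ^ 3)) / XI ^ 4 := by gcongr
    _ = 22 * K * XI ^ s / XI := by field_simp; ring
    _ ≤ (22 * K + 1) * (XI ^ s / XI) := by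
        rw [show (22 * K + 1) * (XI ^ s / XI) = ((22 * K + 1) * XI ^ s) / XI from
          (mul_div_assoc _ _ _).symm]
        gcongr
        nlinarith [hXIs]
end
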